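/- Suppose the volume (measure) of a metric ball in a space satisfies μ(d_c² ≤ x) = c x^{t/2}(1 + O(x)) as x → 0, with density (t/2) c x^{t/2-1}(1+O(x)). Then the m-fold convolution satisfies μ^{(m)}(d_c² ≤ x) = (Γ(t/2+1)^m / Γ(mt/2+1)) c^m x^{mt/2} (1 + O(x)) as x → 0. -/

import Mathlib

open MeasureTheory Real Set

/-- The `m`-fold additive convolution power of a measure on `ℝ`
(`ν^{*0}` is the Dirac mass at `0`). -/
noncomputable def convPow (ν : MeasureTheory.Measure ℝ) : ℕ → MeasureTheory.Measure ℝ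
  | 0 => MeasureTheory.Measure.dirac 0
  | m + 1 => MeasureTheory.Measure.conv (convPow ν m) ν

set_option maxHeartbeats 1000000

lemma real_beta (a b : ℝ) (ha : 0 < a) (hb : 0 < b) :
    ∫ y in (0:ℝ)..1, y ^ (a - 1) * (1 - y) ^ (b - 1)
      = Real.Gamma a * Real.Gamma b / Real.Gamma (a + b) := by
  have key := Complex.Gamma_mul_Gamma_eq_betaIntegral (s := (a:ℂ)) (t := (b:ℂ)) (by simpa) (by simpa)
  have hbeta : Complex.betaIntegral (a:ℂ) (b:ℂ)
      = ((∫ y in (0:ℝ)..1, y ^ (a - 1) * (1 - y) ^ (b - 1) : ℝ) : ℂ) := by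
    rw [Complex.betaIntegral]
    rw [← intervalIntegral.integral_ofReal]
    refine intervalIntegral.integral_congr_ae (Filter.Eventually.of_forall fun y hy => ?_)
    rw [Set.uIoc_of_le (by norm_num : (0:ℝ) ≤ 1)] at hy

    rw [Complex.ofReal_mul, Complex.ofReal_cpow hy.1.le,
      Complex.ofReal_cpow (by linarith [hy.2] : (0:ℝ) ≤ 1 - y)]
    push_cast
    ring
  rw [hbeta] at key
  have hG : Complex.Gamma ((a:ℂ) + b) ≠ 0 := Complex.Gamma_ne_zero (by
    intro n
    intro h
    have : (0:ℝ) < a + b := by linarith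
    rw [show ((a:ℂ) + b) = ((a+b : ℝ) : ℂ) by push_cast; ring] at h
    have := congrArg Complex.re h
    simp at this
    nlinarith [Nat.cast_nonneg (α := ℝ) n])
  have : ((∫ y in (0:ℝ)..1, y ^ (a - 1) * (1 - y) ^ (b - 1) : ℝ) : ℂ)
      = Complex.Gamma a * Complex.Gamma b / Complex.Gamma ((a:ℂ) + b) := by
    field_simp at key ⊢
    linear_combination -key
  rw [show ((a:ℂ) + b) = ((a+b : ℝ) : ℂ) by push_cast; ring] at this
  rw [Complex.Gamma_ofReal, Complex.Gamma_ofReal, Complex.Gamma_ofReal] at this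
  exact_mod_cast this

lemma beta_scaled (a b x : ℝ) (ha : 0 < a) (hb : 0 < b) (hx : 0 < x) :
    ∫ v in (0:ℝ)..x, v ^ (a - 1) * (x - v) ^ (b - 1)
      = Real.Gamma a * Real.Gamma b / Real.Gamma (a + b) * x ^ (a + b - 1) := by
  have h1 := intervalIntegral.smul_integral_comp_mul_left
    (a := 0) (b := 1) (fun v => v ^ (a - 1) * (x - v) ^ (b - 1)) x
  rw [mul_zero, mul_one] at h1
  rw [← h1]
  have h2 : ∫ y in (0:ℝ)..1, (x * y) ^ (a - 1) * (x - x * y) ^ (b - 1)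
      = x ^ (a - 1) * x ^ (b - 1) * ∫ y in (0:ℝ)..1, y ^ (a - 1) * (1 - y) ^ (b - 1) := by
    rw [← intervalIntegral.integral_const_mul]
    refine intervalIntegral.integral_congr_ae (Filter.Eventually.of_forall fun y hy => ?_)
    rw [Set.uIoc_of_le (by norm_num : (0:ℝ) ≤ 1)] at hy
    rw [show x - x * y = x * (1 - y) by ring,
      Real.mul_rpow hx.le hy.1.le, Real.mul_rpow hx.le (by linarith [hy.2])]
    ring
  rw [h2, real_beta a b ha hb]
  rw [smul_eq_mul, show x ^ (a+b-1) = x * (x ^ (a-1) * x ^ (b-1)) by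
    rw [show a+b-1 = 1 + (a-1) + (b-1) by ring, Real.rpow_add hx, Real.rpow_add hx,
      Real.rpow_one]
    ring]
  ring

lemma continuous_rpow_nonneg {p : ℝ} (hp : 0 ≤ p) : Continuous fun b : ℝ => b ^ p :=
  continuous_iff_continuousAt.2 fun b => Real.continuousAt_rpow_const b p (Or.inr hp)

lemma nu_Iio (f : ℝ → ℝ) (hsupp : ∀ x < (0:ℝ), f x = 0)
    (ν : MeasureTheory.Measure ℝ)
    (hν : ν = MeasureTheory.volume.withDensity (fun x => ENNReal.ofReal (f x))) :
    ν (Set.Iio 0) = 0 := by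
  rw [hν, withDensity_apply _ measurableSet_Iio]
  rw [setLIntegral_congr_fun (g := fun _ => (0:ENNReal)) measurableSet_Iio
    (fun v (hv : v < 0) => by simp [hsupp v hv])]
  simp

lemma conv_repr (f : ℝ → ℝ) (hfmeas : Measurable f) (hsupp : ∀ x < (0:ℝ), f x = 0)
    (ν : MeasureTheory.Measure ℝ)
    (hν : ν = MeasureTheory.volume.withDensity (fun x => ENNReal.ofReal (f x)))
    (μ : MeasureTheory.Measure ℝ) [SFinite μ] (hμ0 : μ (Set.Iio 0) = 0) (x : ℝ) :
    MeasureTheory.Measure.conv μ ν (Set.Icc 0 x)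
      = ∫⁻ v in Set.Icc 0 x, ENNReal.ofReal (f v) * μ (Set.Icc 0 (x - v)) ∂volume := by
  have hνs : SFinite ν := hν ▸ inferInstance
  have hνIio : ν (Set.Iio 0) = 0 := nu_Iio f hsupp ν hν
  have hmono : Monotone (fun u : ℝ => μ (Set.Icc 0 u)) :=
    fun u1 u2 h => measure_mono (Set.Icc_subset_Icc_right h)
  have hgm : Measurable (fun v : ℝ => μ (Set.Icc 0 (x - v))) :=
    (hmono.measurable).comp (measurable_const.sub measurable_id)
  rw [MeasureTheory.Measure.conv_comm]
  rw [show MeasureTheory.Measure.conv ν μ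
      = MeasureTheory.Measure.map (fun p : ℝ × ℝ => p.1 + p.2) (ν.prod μ) from rfl]
  rw [MeasureTheory.Measure.map_apply measurable_add measurableSet_Icc]
  rw [MeasureTheory.Measure.prod_apply (measurable_add measurableSet_Icc)]
  have key : ∫⁻ v, μ (Prod.mk v ⁻¹' ((fun p : ℝ × ℝ => p.1 + p.2) ⁻¹' Set.Icc 0 x)) ∂ν
      = ∫⁻ v, μ (Set.Icc 0 (x - v)) ∂ν := by
    refine lintegral_congr_ae ?_
    filter_upwards [measure_eq_zero_iff_ae_notMem.mp hνIio] with v hv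
    have hv0 : 0 ≤ v := not_lt.mp hv
    have hset : Prod.mk v ⁻¹' ((fun p : ℝ × ℝ => p.1 + p.2) ⁻¹' Set.Icc 0 x)
        = Set.Icc (-v) (x - v) := by
      ext u; simp [Set.mem_Icc]; constructor <;> intro h <;> constructor <;> linarith [h.1, h.2]
    rw [hset]
    apply le_antisymm
    · calc μ (Set.Icc (-v) (x - v)) ≤ μ (Set.Icc 0 (x - v) ∪ Set.Iio 0) := by
            apply measure_mono
            intro u hu
            rcases le_or_gt 0 u with h | h
            · exact Or.inl ⟨h, hu.2⟩
            · exact Or.inr h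
        _ ≤ μ (Set.Icc 0 (x - v)) + μ (Set.Iio 0) := measure_union_le _ _
        _ = μ (Set.Icc 0 (x - v)) := by rw [hμ0, add_zero]
    · exact measure_mono (Set.Icc_subset_Icc_left (by linarith))
  rw [key, hν]
  rw [lintegral_withDensity_eq_lintegral_mul _ hfmeas.ennreal_ofReal hgm]
  simp only [Pi.mul_apply]
  have hss : Function.support (fun v => ENNReal.ofReal (f v) * μ (Set.Icc 0 (x - v)))
      ⊆ Set.Icc 0 x := by
    intro v hv
    simp only [Function.mem_support] at hv
    by_contra hvn
    simp only [Set.mem_Icc, not_and_or, not_le] at hvn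
    rcases hvn with h | h
    · rw [hsupp v h] at hv; simp at hv
    · have : Set.Icc (0:ℝ) (x - v) = ∅ := Set.Icc_eq_empty (by intro hh; linarith)
      rw [this] at hv; simp at hv
  exact (setLIntegral_eq_of_support_subset hss).symm

lemma convPow_sfinite (ν : MeasureTheory.Measure ℝ) [SFinite ν] (m : ℕ) :
    SFinite (convPow ν m) := by
  induction m with
  | zero => exact inferInstanceAs (SFinite (MeasureTheory.Measure.dirac (0:ℝ)))
  | succ m ih =>
    haveI := ih
    exact inferInstanceAs (SFinite (MeasureTheory.Measure.conv (convPow ν m) ν))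

lemma conv_Iio (μ ν : MeasureTheory.Measure ℝ) [SFinite μ] [SFinite ν]
    (hμ : μ (Set.Iio 0) = 0) (hν : ν (Set.Iio 0) = 0) :
    MeasureTheory.Measure.conv μ ν (Set.Iio 0) = 0 := by
  rw [show MeasureTheory.Measure.conv μ ν
      = MeasureTheory.Measure.map (fun p : ℝ × ℝ => p.1 + p.2) (μ.prod ν) from rfl]
  rw [MeasureTheory.Measure.map_apply measurable_add measurableSet_Iio]
  rw [MeasureTheory.Measure.prod_apply (measurable_add measurableSet_Iio)]
  rw [lintegral_congr_ae (g := fun _ => (0:ENNReal)) ?_]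
  · simp
  · filter_upwards [measure_eq_zero_iff_ae_notMem.mp hμ] with u hu
    have hu0 : 0 ≤ u := not_lt.mp hu
    have : Prod.mk u ⁻¹' ((fun p : ℝ × ℝ => p.1 + p.2) ⁻¹' Set.Iio 0) ⊆ Set.Iio 0 := by
      intro v hv
      simp only [Set.mem_preimage, Set.mem_Iio] at hv ⊢
      linarith
    exact le_antisymm (le_trans (measure_mono this) hν.le) zero_le

lemma convPow_Iio (ν : MeasureTheory.Measure ℝ) [SFinite ν] (hν : ν (Set.Iio 0) = 0) (m : ℕ) :
    convPow ν m (Set.Iio 0) = 0 := by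
  induction m with
  | zero =>
    rw [show convPow ν 0 = MeasureTheory.Measure.dirac 0 from rfl]
    rw [MeasureTheory.Measure.dirac_apply' _ measurableSet_Iio]
    simp
  | succ m ih =>
    haveI := convPow_sfinite ν m
    exact conv_Iio _ _ ih hν

lemma aux_main (s c : ℝ) (hs : 0 < s) (hc : 0 < c) (f : ℝ → ℝ) (hfmeas : Measurable f)
    (hf0 : ∀ x, 0 ≤ f x) (hsupp : ∀ x < (0:ℝ), f x = 0)
    (δ C : ℝ) (hδ : 0 < δ) (hδ1 : δ ≤ 1) (hC : 0 ≤ C)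
    (hf : ∀ x ∈ Set.Ioo (0:ℝ) δ, |f x - s * c * x ^ (s - 1)| ≤ C * x ^ s)
    (ν : MeasureTheory.Measure ℝ)
    (hν : ν = MeasureTheory.volume.withDensity (fun x => ENNReal.ofReal (f x))) (m : ℕ) :
    ∃ D : ℝ, 0 ≤ D ∧ ∀ x ∈ Set.Ico (0:ℝ) δ,
      convPow ν m (Set.Icc 0 x) ≠ ⊤ ∧
      |(convPow ν m (Set.Icc 0 x)).toReal
        - Real.Gamma (s+1) ^ m / Real.Gamma ((m:ℝ)*s+1) * c ^ m * x ^ ((m:ℝ)*s)|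
        ≤ D * x ^ ((m:ℝ)*s+1) := by
  haveI hνs : SFinite ν := hν ▸ inferInstance
  have hνIio : ν (Set.Iio 0) = 0 := nu_Iio f hsupp ν hν
  induction m with
  | zero =>
    refine ⟨0, le_refl _, fun x hx => ?_⟩
    rw [show convPow ν 0 = MeasureTheory.Measure.dirac 0 from rfl,
      MeasureTheory.Measure.dirac_apply' _ measurableSet_Icc]
    have h0mem : (0:ℝ) ∈ Set.Icc 0 x := ⟨le_refl _, hx.1⟩
    rw [Set.indicator_of_mem h0mem]
    norm_num
  | succ m ih =>
    obtain ⟨D, hD, ihm⟩ := ih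
    haveI hsfm := convPow_sfinite ν m
    have hmIio := convPow_Iio ν hνIio m
    -- notation
    set A : ℝ := Real.Gamma (s+1) ^ m / Real.Gamma ((m:ℝ)*s+1) * c ^ m with hA
    have hGms : 0 < Real.Gamma ((m:ℝ)*s+1) := Real.Gamma_pos_of_pos (by positivity)
    have hGs1 : 0 < Real.Gamma (s+1) := Real.Gamma_pos_of_pos (by positivity)
    have hApos : 0 < A := by rw [hA]; positivity
    set Fm : ℝ → ℝ := fun u => (convPow ν m (Set.Icc 0 u)).toReal with hFm
    have hFm_meas : Measurable Fm := by
      have hmono : Monotone (fun u : ℝ => convPow ν m (Set.Icc 0 u)) :=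
        fun u1 u2 h => measure_mono (Set.Icc_subset_Icc_right h)
      exact ENNReal.measurable_toReal.comp hmono.measurable
    have hFm_nn : ∀ u, 0 ≤ Fm u := fun u => ENNReal.toReal_nonneg
    set Bc : ℝ := Real.Gamma s * Real.Gamma ((m:ℝ)*s+1) / Real.Gamma (s + ((m:ℝ)*s+1)) with hBc
    have hGsum : 0 < Real.Gamma (s + ((m:ℝ)*s+1)) := Real.Gamma_pos_of_pos (by positivity)
    have hGspos : 0 < Real.Gamma s := Real.Gamma_pos_of_pos hs
    have hBcpos : 0 < Bc := by rw [hBc]; positivity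
    set K : ℝ := C * (A + D) + s * c * D with hK
    have hKnn : 0 ≤ K := by rw [hK]; positivity
    refine ⟨K * Bc, by positivity, fun x hx => ?_⟩
    obtain ⟨hx0, hxδ⟩ := hx
    rcases hx0.eq_or_lt with h0 | hxpos
    · -- x = 0
      subst h0
      have hrep : convPow ν (m+1) (Set.Icc 0 (0:ℝ)) = 0 := by
        rw [show convPow ν (m+1) = MeasureTheory.Measure.conv (convPow ν m) ν from rfl,
          conv_repr f hfmeas hsupp ν hν _ hmIio 0]
        rw [MeasureTheory.Measure.restrict_eq_zero.mpr (by simp)]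
        simp
      rw [hrep]
      have he1 : ((m:ℝ)+1)*s ≠ 0 := by positivity
      have he2 : ((m:ℝ)+1)*s+1 ≠ 0 := by positivity
      refine ⟨by simp, ?_⟩
      push_cast
      rw [Real.zero_rpow he1, Real.zero_rpow he2]
      simp
    · -- 0 < x
      have hx1 : x ≤ 1 := le_trans hxδ.le hδ1
      -- representation
      have hrep : convPow ν (m+1) (Set.Icc 0 x)
          = ∫⁻ v in Set.Icc 0 x, ENNReal.ofReal (f v) * convPow ν m (Set.Icc 0 (x - v))
            ∂volume := by
        rw [show convPow ν (m+1) = MeasureTheory.Measure.conv (convPow ν m) ν from rfl]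
        exact conv_repr f hfmeas hsupp ν hν _ hmIio x
      have hfinm : ∀ u ∈ Set.Ico (0:ℝ) δ, convPow ν m (Set.Icc 0 u) ≠ ⊤ :=
        fun u hu => (ihm u hu).1
      have hptw : ∀ v ∈ Set.Icc (0:ℝ) x,
          ENNReal.ofReal (f v) * convPow ν m (Set.Icc 0 (x - v))
            = ENNReal.ofReal (f v * Fm (x - v)) := by
        intro v hv
        have hxv : x - v ∈ Set.Ico (0:ℝ) δ := ⟨by linarith [hv.2], by linarith [hv.1]⟩
        rw [ENNReal.ofReal_mul (hf0 v), hFm, ENNReal.ofReal_toReal (hfinm _ hxv)]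
      rw [setLIntegral_congr_fun measurableSet_Icc
        hptw] at hrep
      -- integrability
      have hfInt : IntervalIntegrable f volume 0 x := by
        have hb : IntervalIntegrable (fun v => s*c*v^(s-1) + C*v^s) volume 0 x :=
          ((intervalIntegral.intervalIntegrable_rpow' (by linarith)).const_mul (s*c)).add
            ((intervalIntegral.intervalIntegrable_rpow' (by linarith)).const_mul C)
        refine hb.mono_fun' (hfmeas.aestronglyMeasurable.restrict) ?_
        refine (MeasureTheory.ae_restrict_iff' measurableSet_uIoc).2
          (Filter.Eventually.of_forall fun v hv => ?_)
        rw [Set.uIoc_of_le hxpos.le] at hv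
        have hvδ : v ∈ Set.Ioo (0:ℝ) δ := ⟨hv.1, lt_of_le_of_lt hv.2 hxδ⟩
        have h1 := hf v hvδ
        rw [abs_le] at h1
        show ‖f v‖ ≤ s * c * v ^ (s - 1) + C * v ^ s
        rw [Real.norm_eq_abs, abs_of_nonneg (hf0 v)]
        linarith [h1.2]
      have hFmb : ∀ v ∈ Set.Icc (0:ℝ) x, Fm (x - v) ≤ Fm x := by
        intro v hv
        exact ENNReal.toReal_mono (hfinm x ⟨hx0, hxδ⟩)
          (measure_mono (Set.Icc_subset_Icc_right (by linarith [hv.1])))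
      have hgmeas : Measurable fun v => f v * Fm (x - v) :=
        hfmeas.mul (hFm_meas.comp (measurable_const.sub measurable_id))
      have hgInt : IntervalIntegrable (fun v => f v * Fm (x - v)) volume 0 x := by
        refine (hfInt.const_mul (Fm x)).mono_fun' hgmeas.aestronglyMeasurable.restrict ?_
        refine (MeasureTheory.ae_restrict_iff' measurableSet_uIoc).2
          (Filter.Eventually.of_forall fun v hv => ?_)
        rw [Set.uIoc_of_le hxpos.le] at hv
        show ‖f v * Fm (x - v)‖ ≤ Fm x * f v
        rw [Real.norm_eq_abs, abs_of_nonneg (mul_nonneg (hf0 v) (hFm_nn _))]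
        calc f v * Fm (x - v) ≤ f v * Fm x :=
              mul_le_mul_of_nonneg_left (hFmb v ⟨hv.1.le, hv.2⟩) (hf0 v)
          _ = Fm x * f v := mul_comm _ _
      -- to real integral
      set J : ℝ := ∫ v in (0:ℝ)..x, f v * Fm (x - v) with hJ
      have hJ0 : 0 ≤ J := intervalIntegral.integral_nonneg hxpos.le
        (fun v _ => mul_nonneg (hf0 v) (hFm_nn _))
      have hIccInt : IntegrableOn (fun v => f v * Fm (x - v)) (Set.Icc 0 x) volume :=
        (intervalIntegrable_iff_integrableOn_Icc_of_le hxpos.le).mp hgInt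
      have hlint : ∫⁻ v in Set.Icc 0 x, ENNReal.ofReal (f v * Fm (x - v)) ∂volume
          = ENNReal.ofReal J := by
        rw [← MeasureTheory.ofReal_integral_eq_lintegral_ofReal hIccInt
          (Filter.Eventually.of_forall fun v => mul_nonneg (hf0 v) (hFm_nn _))]
        rw [hJ, MeasureTheory.integral_Icc_eq_integral_Ioc,
          ← intervalIntegral.integral_of_le hxpos.le]
      rw [hlint] at hrep
      refine ⟨by rw [hrep]; exact ENNReal.ofReal_ne_top, ?_⟩
      rw [hrep, ENNReal.toReal_ofReal hJ0]
      -- beta integral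
      have hbeta := beta_scaled s ((m:ℝ)*s+1) x hs (by positivity) hxpos
      rw [add_sub_cancel_right] at hbeta
      have hbint : IntervalIntegrable (fun v => v^(s-1) * (x-v)^((m:ℝ)*s)) volume 0 x := by
        refine (intervalIntegral.intervalIntegrable_rpow' (by linarith)).mul_continuousOn ?_
        exact ((continuous_rpow_nonneg (by positivity : (0:ℝ) ≤ (m:ℝ)*s)).comp
          (continuous_const.sub continuous_id)).continuousOn
      have hhInt : IntervalIntegrable (fun v => s*c*v^(s-1) * (A * (x-v)^((m:ℝ)*s)))
          volume 0 x := by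
        have he : (fun v => s*c*v^(s-1) * (A * (x-v)^((m:ℝ)*s)))
            = fun v => (s*c*A) * (v^(s-1) * (x-v)^((m:ℝ)*s)) := by funext v; ring
        rw [he]
        exact hbint.const_mul _
      -- value of the model integral
      have hI1 : ∫ v in (0:ℝ)..x, s*c*v^(s-1) * (A * (x-v)^((m:ℝ)*s))
          = Real.Gamma (s+1) ^ (m+1) / Real.Gamma (((m:ℝ)+1)*s+1) * c ^ (m+1)
            * x ^ (((m:ℝ)+1)*s) := by
        have he : (fun v => s*c*v^(s-1) * (A * (x-v)^((m:ℝ)*s)))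
            = fun v => (s*c*A) * (v^(s-1) * (x-v)^((m:ℝ)*s)) := by funext v; ring
        rw [he, intervalIntegral.integral_const_mul, hbeta]
        rw [show s + ((m:ℝ)*s+1) - 1 = ((m:ℝ)+1)*s by ring]
        rw [show s + ((m:ℝ)*s+1) = ((m:ℝ)+1)*s+1 by ring]
        have hGrec : Real.Gamma (s+1) = s * Real.Gamma s := Real.Gamma_add_one hs.ne'
        have hGmspos : 0 < Real.Gamma (((m:ℝ)+1)*s+1) := Real.Gamma_pos_of_pos (by positivity)
        rw [hA, hGrec]
        field_simp
        ring
      -- pointwise error bound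
      have herr : ∀ v ∈ Set.Ioc (0:ℝ) x,
          |f v * Fm (x - v) - s*c*v^(s-1) * (A * (x-v)^((m:ℝ)*s))|
            ≤ K * x * (v^(s-1) * (x-v)^((m:ℝ)*s)) := by
        intro v hv
        have hv0 : 0 < v := hv.1
        have hvx : v ≤ x := hv.2
        set u : ℝ := x - v with hu
        have hu0 : 0 ≤ u := by simp [hu]; linarith
        have huδ : u < δ := by simp [hu]; nlinarith
        have hux : u ≤ x := by simp [hu]; linarith
        have h2 : |Fm u - A * u ^ ((m:ℝ)*s)| ≤ D * u ^ ((m:ℝ)*s+1) := (ihm u ⟨hu0, huδ⟩).2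
        have h1 := hf v ⟨hv0, lt_of_le_of_lt hvx hxδ⟩
        have hums : (0:ℝ) ≤ u ^ ((m:ℝ)*s) := Real.rpow_nonneg hu0 _
        have hvs1 : (0:ℝ) ≤ v ^ (s-1) := Real.rpow_nonneg hv0.le _
        -- u^(ms+1) ≤ x * u^(ms)
        have hu_exp : u ^ ((m:ℝ)*s+1) ≤ x * u ^ ((m:ℝ)*s) := by
          rcases hu0.eq_or_lt with h | h
          · rw [← h, Real.zero_rpow (by positivity)]
            positivity
          · rw [Real.rpow_add h, Real.rpow_one]
            calc u ^ ((m:ℝ)*s) * u ≤ u ^ ((m:ℝ)*s) * x :=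
                  mul_le_mul_of_nonneg_left hux hums
              _ = x * u ^ ((m:ℝ)*s) := mul_comm _ _
        -- v^s ≤ x * v^(s-1)
        have hv_exp : v ^ s ≤ x * v ^ (s-1) := by
          have hvpow : v ^ s = v ^ (s-1) * v := by
            rw [← Real.rpow_add_one hv0.ne' (s-1)]
            congr 1
            ring
          rw [hvpow]
          calc v ^ (s-1) * v ≤ v ^ (s-1) * x := mul_le_mul_of_nonneg_left hvx hvs1
            _ = x * v ^ (s-1) := mul_comm _ _
        -- Fm u ≤ (A + D) * u^(ms)
        have hFu : Fm u ≤ (A + D) * u ^ ((m:ℝ)*s) := by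
          have h2' := (abs_le.1 h2).2
          have hle : u ^ ((m:ℝ)*s+1) ≤ u ^ ((m:ℝ)*s) := by
            rcases hu0.eq_or_lt with h | h
            · rw [← h, Real.zero_rpow (by positivity)]
              positivity
            · exact Real.rpow_le_rpow_of_exponent_ge h (by linarith)
                (by linarith)
          have h3 := mul_le_mul_of_nonneg_left hle hD
          have h4 : Fm u ≤ A * u ^ ((m:ℝ)*s) + D * u ^ ((m:ℝ)*s+1) := by linarith
          calc Fm u ≤ A * u ^ ((m:ℝ)*s) + D * u ^ ((m:ℝ)*s) := by linarith
            _ = (A + D) * u ^ ((m:ℝ)*s) := by ring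
        have habs : |f v * Fm u - s*c*v^(s-1) * (A * u^((m:ℝ)*s))|
            ≤ C * v^s * Fm u + s*c*v^(s-1) * (D * u^((m:ℝ)*s+1)) := by
          have e : f v * Fm u - s*c*v^(s-1) * (A * u^((m:ℝ)*s))
              = (f v - s*c*v^(s-1)) * Fm u
                + (s*c*v^(s-1)) * (Fm u - A * u^((m:ℝ)*s)) := by ring
          rw [e]
          refine (abs_add_le _ _).trans ?_
          rw [abs_mul, abs_mul, abs_of_nonneg (hFm_nn u),
            abs_of_nonneg (mul_nonneg (mul_nonneg hs.le hc.le) hvs1)]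
          exact add_le_add (mul_le_mul_of_nonneg_right h1 (hFm_nn u))
            (mul_le_mul_of_nonneg_left h2 (mul_nonneg (mul_nonneg hs.le hc.le) hvs1))
        refine habs.trans ?_
        have hterm1 : C * v^s * Fm u ≤ C * (x * v^(s-1)) * ((A+D) * u^((m:ℝ)*s)) := by
          refine mul_le_mul ?_ hFu (hFm_nn u)
            (mul_nonneg hC (mul_nonneg hx0 hvs1))
          exact mul_le_mul_of_nonneg_left hv_exp hC
        have hterm2 : s*c*v^(s-1) * (D * u^((m:ℝ)*s+1))
            ≤ s*c*v^(s-1) * (D * (x * u^((m:ℝ)*s))) := by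
          refine mul_le_mul_of_nonneg_left ?_ (mul_nonneg (mul_nonneg hs.le hc.le) hvs1)
          exact mul_le_mul_of_nonneg_left hu_exp hD
        calc C * v^s * Fm u + s*c*v^(s-1) * (D * u^((m:ℝ)*s+1))
            ≤ C * (x * v^(s-1)) * ((A+D) * u^((m:ℝ)*s))
              + s*c*v^(s-1) * (D * (x * u^((m:ℝ)*s))) := add_le_add hterm1 hterm2
          _ = K * x * (v^(s-1) * u^((m:ℝ)*s)) := by rw [hK]; ring
      -- integral inequality
      have hdiff : J - ∫ v in (0:ℝ)..x, s*c*v^(s-1) * (A * (x-v)^((m:ℝ)*s))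
          = ∫ v in (0:ℝ)..x,
              (f v * Fm (x - v) - s*c*v^(s-1) * (A * (x-v)^((m:ℝ)*s))) := by
        rw [hJ, ← intervalIntegral.integral_sub hgInt hhInt]
      have hKxint : IntervalIntegrable (fun v => K * x * (v^(s-1) * (x-v)^((m:ℝ)*s)))
          volume 0 x := hbint.const_mul _
      have hbound : |J - ∫ v in (0:ℝ)..x, s*c*v^(s-1) * (A * (x-v)^((m:ℝ)*s))|
          ≤ |∫ v in (0:ℝ)..x, K * x * (v^(s-1) * (x-v)^((m:ℝ)*s))| := by
        rw [hdiff]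
        rw [← Real.norm_eq_abs]
        refine intervalIntegral.norm_integral_le_abs_of_norm_le ?_ hKxint
        refine (MeasureTheory.ae_restrict_iff' measurableSet_uIoc).2
          (Filter.Eventually.of_forall fun v hv => ?_)
        rw [Set.uIoc_of_le hxpos.le] at hv
        rw [Real.norm_eq_abs]
        exact herr v hv
      have hKxval : ∫ v in (0:ℝ)..x, K * x * (v^(s-1) * (x-v)^((m:ℝ)*s))
          = K * Bc * x ^ (((m:ℝ)+1)*s+1) := by
        rw [intervalIntegral.integral_const_mul, hbeta]
        rw [show s + ((m:ℝ)*s+1) - 1 = ((m:ℝ)+1)*s by ring]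
        rw [show (((m:ℝ)+1)*s+1) = (((m:ℝ)+1)*s) + 1 by ring, Real.rpow_add hxpos,
          Real.rpow_one, hBc]
        ring
      rw [hI1, hKxval] at hbound
      have hnn : 0 ≤ K * Bc * x ^ (((m:ℝ)+1)*s+1) :=
        mul_nonneg (mul_nonneg hKnn hBcpos.le) (Real.rpow_nonneg hx0 _)
      rw [abs_of_nonneg hnn] at hbound
      push_cast
      exact hbound


/-- Suppose a measure `ν` on `[0,∞)` has density `f` with
`f(x) = (t/2) c x^{t/2-1}(1+O(x))` as `x → 0⁺` (so that
`ν(d_c² ≤ x) = c x^{t/2}(1+O(x))`). Then its `m`-fold convolution satisfies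
`ν^{*m}([0,x]) = (Γ(t/2+1)^m / Γ(mt/2+1)) c^m x^{mt/2}(1 + O(x))` as `x → 0⁺`. -/
theorem convPow_small_ball_volume (t c : ℝ) (ht : 0 < t) (hc : 0 < c)
    (f : ℝ → ℝ) (hfmeas : Measurable f) (hf0 : ∀ x, 0 ≤ f x)
    (hsupp : ∀ x < (0:ℝ), f x = 0)
    (hasymp : ∃ δ > (0:ℝ), ∃ C : ℝ, ∀ x ∈ Set.Ioo (0:ℝ) δ,
      |f x - (t / 2) * c * x ^ (t / 2 - 1)| ≤ C * x ^ (t / 2))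
    (ν : MeasureTheory.Measure ℝ)
    (hν : ν = MeasureTheory.volume.withDensity (fun x => ENNReal.ofReal (f x)))
    (m : ℕ) (hm : 1 ≤ m) :
    ∃ δ' > (0:ℝ), ∃ C' : ℝ, ∀ x ∈ Set.Ioo (0:ℝ) δ',
      |((convPow ν m) (Set.Icc 0 x)).toReal -
          (Real.Gamma (t / 2 + 1)) ^ m / Real.Gamma ((m : ℝ) * t / 2 + 1) *
            c ^ m * x ^ ((m : ℝ) * t / 2)|
        ≤ C' * x ^ ((m : ℝ) * t / 2 + 1) := by
  obtain ⟨δ₀, hδ₀, C₀, hC₀⟩ := hasymp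
  have hf' : ∀ x ∈ Set.Ioo (0:ℝ) (min δ₀ 1),
      |f x - (t/2) * c * x ^ (t/2 - 1)| ≤ max C₀ 0 * x ^ (t/2) := by
    intro x hx
    have hx' : x ∈ Set.Ioo (0:ℝ) δ₀ := ⟨hx.1, lt_of_lt_of_le hx.2 (min_le_left _ _)⟩
    refine (hC₀ x hx').trans ?_
    exact mul_le_mul_of_nonneg_right (le_max_left _ _) (Real.rpow_nonneg hx.1.le _)
  obtain ⟨D, hD, hmain⟩ := aux_main (t/2) c (by linarith) hc f hfmeas hf0 hsupp
    (min δ₀ 1) (max C₀ 0) (lt_min hδ₀ one_pos) (min_le_right _ _) (le_max_right _ _)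
    hf' ν hν m
  refine ⟨min δ₀ 1, lt_min hδ₀ one_pos, D, fun x hx => ?_⟩
  have h := (hmain x ⟨hx.1.le, hx.2⟩).2
  rw [show (m:ℝ) * t / 2 = (m:ℝ) * (t/2) by ring]
  exact h
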